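/- arXiv:1905.07483 — 2 statements merged into one kernel-verified Lean document; each statement's English description precedes it below -/
import Mathlib

section
/- Let F ⊆ V ∪ E, let s,t ∈ V, and let P be a minimum-weight s-to-t path in G∖F (so its weight is d_G(s,t,F) < ∞). Let h ≥ 1 be an integer and let B ⊆ V be a set that intersects every contiguous subpath of P consisting of exactly h edges. Let H be the complete weighted directed graph on the vertex set B ∪ {s,t} in which every edge (u,v) has weight d^{2h}_G(u,v,F). Then d_H(s,t) = d_G(s,t,F). -/
open scoped ENNReal

namespace DSO

variable {V : Type*}

/-- `p` is a walk from `u` to `w` in the graph with edge relation `E`: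
a nonempty list of vertices, consecutive vertices joined by edges. -/
def IsWalk (E : V → V → Prop) (p : List V) (u w : V) : Prop :=
  p ≠ [] ∧ p.head? = some u ∧ p.getLast? = some w ∧ p.Chain' E

/-- The number of edges of a path given as a list of vertices. -/
def pathLen (p : List V) : ℕ := p.length - 1

/-- Total weight of a path, for real edge weights `w`. -/
def wt (w : V → V → ℝ) : List V → ℝ
  | [] => 0
  | [_] => 0
  | a :: b :: rest => w a b + wt w (b :: rest)

/-- Total weight of a path, for `ℝ≥0∞`-valued edge weights `w`. -/
noncomputable def ewt (w : V → V → ℝ≥0∞) : List V → ℝ≥0∞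
  | [] => 0
  | [_] => 0
  | a :: b :: rest => w a b + ewt w (b :: rest)

/-- A failure set `F ⊆ V ∪ E` is modelled as a set in `V ⊕ V × V`.
`IsFWalk E F p u w`: `p` is a `u`-to-`w` walk in `G ∖ F`, i.e. it uses no failed edge and
visits no failed vertex. -/
def IsFWalk (E : V → V → Prop) (F : Set (V ⊕ V × V)) (p : List V) (u w : V) : Prop :=
  IsWalk (fun a b => E a b ∧ Sum.inr (a, b) ∉ F) p u w ∧ ∀ x ∈ p, Sum.inl x ∉ F

/-- `d_G(u, x, F)`: the minimum weight of a `u`-to-`x` path in `G ∖ F` (`⊤` if none). -/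
noncomputable def fdist (E : V → V → Prop) (w : V → V → ℝ) (F : Set (V ⊕ V × V))
    (u x : V) : ℝ≥0∞ :=
  sInf ((fun p => ENNReal.ofReal (wt w p)) '' {p | IsFWalk E F p u x})

/-- `d^L_G(u, x, F)`: the minimum weight of a `u`-to-`x` path in `G ∖ F` containing at most
`L` edges (`⊤` if none). -/
noncomputable def fdistL (E : V → V → Prop) (w : V → V → ℝ) (F : Set (V ⊕ V × V))
    (L : ℕ) (u x : V) : ℝ≥0∞ :=
  sInf ((fun p => ENNReal.ofReal (wt w p)) '' {p | IsFWalk E F p u x ∧ pathLen p ≤ L})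

/-- Weighted distance in an abstract `ℝ≥0∞`-weighted digraph `(E, w)`. -/
noncomputable def ewdist (E : V → V → Prop) (w : V → V → ℝ≥0∞) (u x : V) : ℝ≥0∞ :=
  sInf ((fun p => ewt w p) '' {p | IsWalk E p u x})

/-- `𝒟_f`: the family of all contiguous subpaths with exactly `L` edges of the (unique)
shortest paths `P_G(s,t,F)`, over all `s, t ∈ V` and all `F ⊆ V ∪ E` with `|F| ≤ f`. -/
def Dfam (E : V → V → Prop) (w : V → V → ℝ) (f L : ℕ) : Set (List V) :=
  {Q | ∃ (s t : V) (F : Set (V ⊕ V × V)) (Pst : List V),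
      F.Finite ∧ F.ncard ≤ f ∧
      IsFWalk E F Pst s t ∧ ENNReal.ofReal (wt w Pst) = fdist E w F s t ∧
      Q <:+: Pst ∧ pathLen Q = L ∧ Q ≠ []}

end DSO

namespace DSO

variable {V : Type*}


lemma wt_nonneg (w : V → V → ℝ) (hw : ∀ a b, 0 ≤ w a b) : ∀ p : List V, 0 ≤ wt w p
  | [] => le_refl 0
  | [_] => le_refl 0
  | a :: b :: rest => add_nonneg (hw a b) (wt_nonneg w hw (b :: rest))

lemma wt_append (w : V → V → ℝ) : ∀ (p q : List V), p.getLast? = q.head? →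
    wt w (p ++ q.tail) = wt w p + wt w q
  | [], q, h => by
      have hq : q = [] := by cases q <;> simp_all
      subst hq; simp [wt]
  | [a], q, h => by
      cases q with
      | nil => simp at h
      | cons b q' =>
        have hab : a = b := by simpa using h
        subst hab
        simp [wt]
  | a :: b :: rest, q, h => by
      have ih := wt_append w (b :: rest) q (by simpa using h)
      simp only [List.cons_append, List.append_eq, wt] at ih ⊢
      rw [ih]; ring

lemma isWalk_glue {E' : V → V → Prop} {p q : List V} {u v x : V}
    (hp : IsWalk E' p u v) (hq : IsWalk E' q v x) : IsWalk E' (p ++ q.tail) u x := by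
  obtain ⟨hpne, hph, hpl, hpc⟩ := hp
  obtain ⟨hqne, hqh, hql, hqc⟩ := hq
  cases q with
  | nil => exact absurd rfl hqne
  | cons b q' =>
    have hb : v = b := by symm; simpa using hqh
    subst hb
    refine ⟨by simp [hpne], ?_, ?_, ?_⟩
    · rw [List.head?_append_of_ne_nil _ hpne]; exact hph
    · cases q' with
      | nil =>
        have : v = x := by simpa using hql
        subst this; simpa using hpl
      | cons c q'' =>
        rw [show (v :: c :: q'').tail = c :: q'' from rfl,
          List.getLast?_append_of_ne_nil _ (by simp)]
        simpa using hql
    · unfold List.Chain' at hpc hqc ⊢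
      rw [List.isChain_append]
      refine ⟨hpc, hqc.tail, ?_⟩
      intro a ha y hy
      have hav : a = v := by rw [hpl] at ha; have := ha; simp at this; exact this.symm
      subst hav
      cases q' with
      | nil => simp at hy
      | cons c q'' =>
        have hyc : y = c := by have h2 := hy; simp at h2; exact h2.symm
        subst hyc
        exact (List.isChain_cons_cons.mp hqc).1

lemma isFWalk_glue {E' : V → V → Prop} {F : Set (V ⊕ V × V)} {p q : List V} {u v x : V}
    (hp : IsFWalk E' F p u v) (hq : IsFWalk E' F q v x) : IsFWalk E' F (p ++ q.tail) u x := by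
  refine ⟨isWalk_glue hp.1 hq.1, ?_⟩
  intro y hy
  rcases List.mem_append.mp hy with h' | h'
  · exact hp.2 y h'
  · exact hq.2 y (List.mem_of_mem_tail h')

lemma isWalk_take {E' : V → V → Prop} {Q : List V} {u t : V}
    (hQ : IsWalk E' Q u t) {i : ℕ} (hi : i < Q.length) :
    IsWalk E' (Q.take (i+1)) u Q[i] := by
  obtain ⟨hne, hh, hl, hc⟩ := hQ
  refine ⟨?_, ?_, ?_, hc.prefix (List.take_prefix _ _)⟩
  · have : (Q.take (i+1)).length = i + 1 := by
      rw [List.length_take]; omega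
    intro hcon; rw [hcon] at this; simp at this
  · cases Q with
    | nil => simp at hi
    | cons a l => simpa using hh
  · rw [List.getLast?_eq_getElem?]
    have hlen : (Q.take (i+1)).length = i + 1 := by rw [List.length_take]; omega
    rw [hlen]
    simp only [Nat.add_sub_cancel, List.getElem?_take]
    rw [if_pos (Nat.lt_succ_self i), List.getElem?_eq_getElem hi]

lemma isWalk_drop {E' : V → V → Prop} {Q : List V} {u t : V}
    (hQ : IsWalk E' Q u t) {i : ℕ} (hi : i < Q.length) :
    IsWalk E' (Q.drop i) Q[i] t := by
  obtain ⟨hne, hh, hl, hc⟩ := hQ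
  have hdne : Q.drop i ≠ [] := by
    intro hcon
    have := congrArg List.length hcon
    simp [List.length_drop] at this; omega
  refine ⟨hdne, ?_, ?_, hc.suffix (List.drop_suffix _ _)⟩
  · rw [List.head?_drop, List.getElem?_eq_getElem hi]
  · conv_rhs => rw [← hl]
    conv_rhs => rw [← List.take_append_drop i Q]
    rw [List.getLast?_append_of_ne_nil _ hdne]

lemma isFWalk_take {E' : V → V → Prop} {F : Set (V ⊕ V × V)} {Q : List V} {u t : V}
    (hQ : IsFWalk E' F Q u t) {i : ℕ} (hi : i < Q.length) :
    IsFWalk E' F (Q.take (i+1)) u Q[i] :=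
  ⟨isWalk_take hQ.1 hi, fun x hx => hQ.2 x ((List.take_prefix _ _).subset hx)⟩

lemma isFWalk_drop {E' : V → V → Prop} {F : Set (V ⊕ V × V)} {Q : List V} {u t : V}
    (hQ : IsFWalk E' F Q u t) {i : ℕ} (hi : i < Q.length) :
    IsFWalk E' F (Q.drop i) Q[i] t :=
  ⟨isWalk_drop hQ.1 hi, fun x hx => hQ.2 x ((List.drop_suffix _ _).subset hx)⟩

lemma wt_split (w : V → V → ℝ) (Q : List V) {i : ℕ} (hi : i < Q.length) :
    wt w Q = wt w (Q.take (i+1)) + wt w (Q.drop i) := by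
  have h1 : Q.take (i+1) ++ (Q.drop i).tail = Q := by
    rw [List.tail_drop, List.take_append_drop]
  have h2 : (Q.take (i+1)).getLast? = (Q.drop i).head? := by
    rw [List.head?_drop, List.getElem?_eq_getElem hi, List.getLast?_eq_getElem?]
    have hlen : (Q.take (i+1)).length = i + 1 := by rw [List.length_take]; omega
    rw [hlen]
    simp only [Nat.add_sub_cancel, List.getElem?_take]
    rw [if_pos (Nat.lt_succ_self i), List.getElem?_eq_getElem hi]
  rw [← wt_append w _ _ h2, h1]

lemma fdist_le {E' : V → V → Prop} {w : V → V → ℝ} {F : Set (V ⊕ V × V)} {u x : V}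
    {p : List V} (hp : IsFWalk E' F p u x) :
    fdist E' w F u x ≤ ENNReal.ofReal (wt w p) :=
  sInf_le ⟨p, hp, rfl⟩

lemma fdistL_le {E' : V → V → Prop} {w : V → V → ℝ} {F : Set (V ⊕ V × V)} {L : ℕ} {u x : V}
    {p : List V} (hp : IsFWalk E' F p u x) (hlen : pathLen p ≤ L) :
    fdistL E' w F L u x ≤ ENNReal.ofReal (wt w p) :=
  sInf_le ⟨p, ⟨hp, hlen⟩, rfl⟩

lemma fdist_le_fdistL {E' : V → V → Prop} {w : V → V → ℝ} {F : Set (V ⊕ V × V)} {L : ℕ}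
    {u x : V} : fdist E' w F u x ≤ fdistL E' w F L u x :=
  sInf_le_sInf (Set.image_mono (fun _ hp => hp.1))

lemma fdist_triangle {E' : V → V → Prop} {w : V → V → ℝ} (hw : ∀ a b, 0 ≤ w a b)
    {F : Set (V ⊕ V × V)} (u v x : V) :
    fdist E' w F u x ≤ fdist E' w F u v + fdist E' w F v x := by
  by_cases h1 : fdist E' w F u v = ⊤
  · simp [h1]
  by_cases h2 : fdist E' w F v x = ⊤
  · simp [h2]
  refine ENNReal.le_of_forall_pos_le_add fun ε hε _ => ?_
  have hε2 : ((ε : ℝ≥0∞) / 2) ≠ 0 := by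
    simp [ENNReal.div_eq_zero_iff]
    exact_mod_cast hε.ne'
  have l1 : fdist E' w F u v < fdist E' w F u v + (ε : ℝ≥0∞) / 2 :=
    ENNReal.lt_add_right h1 hε2
  have l2 : fdist E' w F v x < fdist E' w F v x + (ε : ℝ≥0∞) / 2 :=
    ENNReal.lt_add_right h2 hε2
  obtain ⟨a, ⟨p1, hp1, rfl⟩, ha⟩ := sInf_lt_iff.mp l1
  obtain ⟨b, ⟨p2, hp2, rfl⟩, hb⟩ := sInf_lt_iff.mp l2
  have hglue : IsFWalk E' F (p1 ++ p2.tail) u x := isFWalk_glue hp1 hp2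
  have hlast : p1.getLast? = p2.head? := by
    rw [hp1.1.2.2.1, hp2.1.2.1]
  calc fdist E' w F u x ≤ ENNReal.ofReal (wt w (p1 ++ p2.tail)) := fdist_le hglue
    _ = ENNReal.ofReal (wt w p1) + ENNReal.ofReal (wt w p2) := by
        rw [wt_append w _ _ hlast, ENNReal.ofReal_add (wt_nonneg w hw p1) (wt_nonneg w hw p2)]
    _ ≤ (fdist E' w F u v + (ε : ℝ≥0∞) / 2) + (fdist E' w F v x + (ε : ℝ≥0∞) / 2) :=
        add_le_add ha.le hb.le
    _ = fdist E' w F u v + fdist E' w F v x + ε := by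
        rw [add_add_add_comm, ENNReal.add_halves]


lemma fdist_self_le_zero {E' : V → V → Prop} {w : V → V → ℝ} {F : Set (V ⊕ V × V)} {t : V}
    (ht : Sum.inl t ∉ F) : fdist E' w F t t ≤ 0 := by
  have h1 : IsFWalk E' F [t] t t :=
    ⟨⟨by simp, rfl, rfl, List.isChain_singleton t⟩, by
      intro x hx; simp at hx; subst hx; exact ht⟩
  have h2 := fdist_le (w := w) h1
  simpa [wt] using h2

lemma ewdist_lower {E' : V → V → Prop} {w : V → V → ℝ} (hw : ∀ a b, 0 ≤ w a b)
    {F : Set (V ⊕ V × V)} {L : ℕ} {S : Set V} {t : V} (ht : Sum.inl t ∉ F) :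
    ∀ (p : List V) (u : V), IsWalk (fun a b => a ∈ S ∧ b ∈ S) p u t →
      fdist E' w F u t ≤ ewt (fun a b => fdistL E' w F L a b) p
  | [], u, hp => absurd rfl hp.1
  | [a], u, hp => by
      obtain ⟨_, hh, hl, _⟩ := hp
      have hua : a = u := by simpa using hh
      have hat : a = t := by simpa using hl
      subst hua; subst hat
      simpa [ewt] using fdist_self_le_zero (E' := E') (w := w) ht
  | a :: b :: rest, u, hp => by
      obtain ⟨_, hh, hl, hc⟩ := hp
      have hua : a = u := by simpa using hh
      subst hua
      have htail : IsWalk (fun a b => a ∈ S ∧ b ∈ S) (b :: rest) b t :=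
        ⟨by simp, rfl, by simpa using hl, hc.tail⟩
      have ih := ewdist_lower (E' := E') (L := L) hw ht (b :: rest) b htail
      calc fdist E' w F a t ≤ fdist E' w F a b + fdist E' w F b t := fdist_triangle hw a b t
        _ ≤ fdistL E' w F L a b + ewt (fun a b => fdistL E' w F L a b) (b :: rest) :=
            add_le_add fdist_le_fdistL ih
        _ = ewt (fun a b => fdistL E' w F L a b) (a :: b :: rest) := rfl

lemma ewdist_upper {E' : V → V → Prop} {w : V → V → ℝ} (hw : ∀ a b, 0 ≤ w a b)
    {F : Set (V ⊕ V × V)} (s t : V) (B : Set V) (h : ℕ) (hh : 1 ≤ h) :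
    ∀ (n : ℕ) (Q : List V) (u : V), Q.length ≤ n → u ∈ insert s (insert t B) →
      IsFWalk E' F Q u t →
      (∀ R : List V, R <:+: Q → pathLen R = h → R ≠ [] → ∃ x ∈ R, x ∈ B) →
      ∃ p : List V,
        IsWalk (fun a b => a ∈ insert s (insert t B) ∧ b ∈ insert s (insert t B)) p u t ∧
        ewt (fun a b => fdistL E' w F (2 * h) a b) p ≤ ENNReal.ofReal (wt w Q) := by
  intro n
  induction n with
  | zero =>
    intro Q u hlen _ hQ _
    exact absurd (List.length_eq_zero_iff.mp (Nat.le_zero.mp hlen)) hQ.1.1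
  | succ n ih =>
    intro Q u hlen huS hQ hsub
    have htS : t ∈ insert s (insert t B) := Set.mem_insert_iff.mpr (Or.inr (Set.mem_insert t B))
    have hQne := hQ.1.1
    have hQlen : 1 ≤ Q.length := List.length_pos_iff.mpr hQne
    by_cases hcase : pathLen Q ≤ 2 * h
    · refine ⟨[u, t], ⟨by simp, rfl, by simp, ?_⟩, ?_⟩
      · exact List.isChain_cons_cons.mpr ⟨⟨huS, htS⟩, List.isChain_singleton t⟩
      · have h1 : fdistL E' w F (2 * h) u t ≤ ENNReal.ofReal (wt w Q) := fdistL_le hQ hcase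
        simpa [ewt] using h1
    · push_neg at hcase
      have hQbig : 2 * h + 2 ≤ Q.length := by
        unfold pathLen at hcase; omega
      have hRlen : ((Q.drop 1).take (h + 1)).length = h + 1 := by
        rw [List.length_take, List.length_drop]; omega
      have hRinf : (Q.drop 1).take (h + 1) <:+: Q :=
        (List.take_prefix _ _).isInfix.trans (List.drop_suffix _ _).isInfix
      obtain ⟨x, hxR, hxB⟩ := hsub _ hRinf (by simp only [pathLen, hRlen]; omega)
        (by intro hcon; rw [hcon] at hRlen; simp at hRlen)
      obtain ⟨j, hj, hxj⟩ := List.mem_iff_getElem.mp hxR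
      rw [hRlen] at hj
      have hiQ : 1 + j < Q.length := by omega
      have hxQ : Q[1 + j]'hiQ = x := by
        rw [← hxj, List.getElem_take, List.getElem_drop]
      have hfront : IsFWalk E' F (Q.take (1 + j + 1)) u x := hxQ ▸ isFWalk_take hQ hiQ
      have hback : IsFWalk E' F (Q.drop (1 + j)) x t := hxQ ▸ isFWalk_drop hQ hiQ
      have hxS : x ∈ insert s (insert t B) :=
        Set.mem_insert_iff.mpr (Or.inr (Set.mem_insert_iff.mpr (Or.inr hxB)))
      have hbacklen : (Q.drop (1 + j)).length ≤ n := by rw [List.length_drop]; omega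
      have hsub' : ∀ R' : List V, R' <:+: Q.drop (1 + j) → pathLen R' = h → R' ≠ [] →
          ∃ y ∈ R', y ∈ B :=
        fun R' hR' => hsub R' (hR'.trans (List.drop_suffix _ _).isInfix)
      obtain ⟨p, hpwalk, hple⟩ := ih (Q.drop (1 + j)) x hbacklen hxS hback hsub'
      cases p with
      | nil => exact absurd rfl hpwalk.1
      | cons y p' =>
        have hyx : y = x := by simpa using hpwalk.2.1
        subst hyx
        refine ⟨u :: y :: p',
          ⟨by simp, rfl, by simpa using hpwalk.2.2.1,
            List.isChain_cons_cons.mpr ⟨⟨huS, hxS⟩, hpwalk.2.2.2⟩⟩, ?_⟩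
        have hfle : fdistL E' w F (2 * h) u y ≤ ENNReal.ofReal (wt w (Q.take (1 + j + 1))) := by
          apply fdistL_le hfront
          simp only [pathLen, List.length_take]
          omega
        calc ewt (fun a b => fdistL E' w F (2 * h) a b) (u :: y :: p')
            = fdistL E' w F (2 * h) u y + ewt (fun a b => fdistL E' w F (2 * h) a b) (y :: p') :=
              rfl
          _ ≤ ENNReal.ofReal (wt w (Q.take (1 + j + 1))) + ENNReal.ofReal (wt w (Q.drop (1 + j))) :=
              add_le_add hfle hple
          _ = ENNReal.ofReal (wt w Q) := by
              rw [← ENNReal.ofReal_add (wt_nonneg w hw _) (wt_nonneg w hw _), ← wt_split w Q hiQ]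


end DSO


/-- Let `P` be a minimum-weight `s`-to-`t` path in `G∖F`, let `h ≥ 1`, and
let `B ⊆ V` intersect every contiguous subpath of `P` with exactly `h` edges. If `H` is the
complete weighted digraph on `B ∪ {s,t}` with edge weights `d^{2h}_G(u,v,F)`, then
`d_H(s,t) = d_G(s,t,F)`. -/
theorem stmt14 {V : Type*} [Fintype V]
    (E : V → V → Prop) (w : V → V → ℝ) (hw : ∀ a b, 0 ≤ w a b)
    (F : Set (V ⊕ V × V)) (s t : V) (P : List V)
    (hP : DSO.IsFWalk E F P s t)
    (hPmin : ENNReal.ofReal (DSO.wt w P) = DSO.fdist E w F s t)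
    (h : ℕ) (hh : 1 ≤ h) (B : Set V)
    (hB : ∀ Q : List V, Q <:+: P → DSO.pathLen Q = h → Q ≠ [] → ∃ x ∈ Q, x ∈ B) :
    DSO.ewdist (fun a b => a ∈ insert s (insert t B) ∧ b ∈ insert s (insert t B))
        (fun a b => DSO.fdistL E w F (2 * h) a b) s t =
      DSO.fdist E w F s t := by
  have htP : t ∈ P := by
    obtain ⟨hne, hx⟩ := List.mem_getLast?_eq_getLast (l := P) (x := t) hP.1.2.2.1
    rw [hx]; exact List.getLast_mem hne
  have htF : Sum.inl t ∉ F := hP.2 t htP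
  apply le_antisymm
  · obtain ⟨p, hpw, hple⟩ :=
      DSO.ewdist_upper hw s t B h hh P.length P s le_rfl (Set.mem_insert s _) hP hB
    calc DSO.ewdist (fun a b => a ∈ insert s (insert t B) ∧ b ∈ insert s (insert t B))
          (fun a b => DSO.fdistL E w F (2 * h) a b) s t
        ≤ DSO.ewt (fun a b => DSO.fdistL E w F (2 * h) a b) p := sInf_le ⟨p, hpw, rfl⟩
      _ ≤ ENNReal.ofReal (DSO.wt w P) := hple
      _ = DSO.fdist E w F s t := hPmin
  · refine le_sInf ?_
    rintro b ⟨p, hp, rfl⟩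
    exact DSO.ewdist_lower hw htF p s hp
end

section
/- Let F ⊆ V ∪ E, let t ∈ V, and let L ≥ 1 be an integer. Let H be a weighted directed graph whose vertices are vertices of V not in F, each of whose edges is of one of two types: (i) an edge (u,v) of G with u, v and (u,v) all not in F, carrying weight ω(u,v); or (ii) a shortcut edge (u,t) carrying weight d^L_G(u,t,F) (required to be finite). Let s ∈ V, and suppose ⟨v_0,…,v_m⟩ with v_0 = s and v_m = t is a minimum-weight s-to-t path among the paths in G∖F with at most L edges (so its weight is d^L_G(s,t,F)), and suppose that for every 0 ≤ i < m either (v_i, v_{i+1}) is an edge of H of type (i) or (v_i, t) is an edge of H of type (ii). Then d_G(s,t,F) ≤ d_H(s,t) ≤ d^L_G(s,t,F). -/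
open scoped ENNReal

section Aux

open DSO

variable {V : Type*}

lemma wt_nonneg' (w : V → V → ℝ) (hw : ∀ a b, 0 ≤ w a b) : ∀ p : List V, 0 ≤ DSO.wt w p
  | [] => le_refl 0
  | [_] => le_refl 0
  | a :: b :: rest => add_nonneg (hw a b) (wt_nonneg' w hw (b :: rest))

lemma ofReal_wt_cons' (w : V → V → ℝ) (hw : ∀ a b, 0 ≤ w a b) (a b : V) (rest : List V) :
    ENNReal.ofReal (DSO.wt w (a :: b :: rest)) =
      ENNReal.ofReal (w a b) + ENNReal.ofReal (DSO.wt w (b :: rest)) := by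
  rw [show DSO.wt w (a :: b :: rest) = w a b + DSO.wt w (b :: rest) from rfl,
    ENNReal.ofReal_add (hw a b) (wt_nonneg' w hw _)]

lemma mem_of_getLast?' : ∀ {p : List V} {a : V}, p.getLast? = some a → a ∈ p
  | [], a, h => by simp at h
  | [x], a, h => by simp_all
  | x :: y :: rest, a, h => by
      rw [List.getLast?_cons_cons] at h
      exact List.mem_cons_of_mem _ (mem_of_getLast?' h)

lemma isWalk_tail' {E : V → V → Prop} {a b : V} {rest : List V} {u t : V}
    (h : IsWalk E (a :: b :: rest) u t) : IsWalk E (b :: rest) b t := by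
  obtain ⟨-, -, hl, hc⟩ := h
  rw [List.getLast?_cons_cons] at hl
  exact ⟨List.cons_ne_nil _ _, rfl, hl, (List.isChain_cons_cons.1 hc).2⟩

lemma isWalk_head' {E : V → V → Prop} {a : V} {l : List V} {u t : V}
    (h : IsWalk E (a :: l) u t) : a = u := by
  have := h.2.1; simpa using this

lemma fdist_triangle' {E : V → V → Prop} {w : V → V → ℝ} (hw : ∀ a b, 0 ≤ w a b)
    {F : Set (V ⊕ V × V)} {a b c : V}
    (hE : E a b) (hab : Sum.inr (a, b) ∉ F) (ha : Sum.inl a ∉ F) :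
    fdist E w F a c ≤ ENNReal.ofReal (w a b) + fdist E w F b c := by
  conv_rhs => rw [add_comm, fdist, ENNReal.sInf_add]
  refine le_iInf₂ fun x hx => ?_
  obtain ⟨p, hp, rfl⟩ := hx
  obtain ⟨⟨hne, hh, hl, hc⟩, hF⟩ := hp
  match p, hne with
  | b' :: rest, _ =>
    have hb : b' = b := by simpa using hh
    subst hb
    have hmem : IsFWalk E F (a :: b' :: rest) a c := by
      refine ⟨⟨List.cons_ne_nil _ _, rfl, ?_, List.isChain_cons_cons.2 ⟨⟨hE, hab⟩, hc⟩⟩, ?_⟩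
      · rw [List.getLast?_cons_cons]; exact hl
      · intro x hx
        rcases List.mem_cons.1 hx with rfl | hx
        · exact ha
        · exact hF x hx
    calc fdist E w F a c ≤ ENNReal.ofReal (DSO.wt w (a :: b' :: rest)) :=
          sInf_le ⟨_, hmem, rfl⟩
      _ = ENNReal.ofReal (DSO.wt w (b' :: rest)) + ENNReal.ofReal (w a b') := by
          rw [ofReal_wt_cons' w hw, add_comm]

lemma ewdist_triangle' {EH : V → V → Prop} {wH : V → V → ℝ≥0∞} {a b c : V}
    (hE : EH a b) :
    ewdist EH wH a c ≤ wH a b + ewdist EH wH b c := by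
  conv_rhs => rw [add_comm, ewdist, ENNReal.sInf_add]
  refine le_iInf₂ fun x hx => ?_
  obtain ⟨p, hp, rfl⟩ := hx
  obtain ⟨hne, hh, hl, hc⟩ := hp
  match p, hne with
  | b' :: rest, _ =>
    have hb : b' = b := by simpa using hh
    subst hb
    have hmem : IsWalk EH (a :: b' :: rest) a c := by
      refine ⟨List.cons_ne_nil _ _, rfl, ?_, List.isChain_cons_cons.2 ⟨hE, hc⟩⟩
      rw [List.getLast?_cons_cons]; exact hl
    calc ewdist EH wH a c ≤ ewt wH (a :: b' :: rest) := sInf_le ⟨_, hmem, rfl⟩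
      _ = ewt wH (b' :: rest) + wH a b' := by
          rw [show ewt wH (a :: b' :: rest) = wH a b' + ewt wH (b' :: rest) from rfl, add_comm]

lemma fdist_le_fdistL' (E : V → V → Prop) (w : V → V → ℝ) (F : Set (V ⊕ V × V))
    (L : ℕ) (u x : V) : fdist E w F u x ≤ fdistL E w F L u x :=
  sInf_le_sInf (Set.image_mono fun p hp => hp.1)

lemma fdist_le_ewt' (E : V → V → Prop) (w : V → V → ℝ) (hw : ∀ a b, 0 ≤ w a b)
    (F : Set (V ⊕ V × V)) (t : V) (L : ℕ)
    (EH : V → V → Prop) (wH : V → V → ℝ≥0∞)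
    (hH : ∀ a b, EH a b → Sum.inl a ∉ F ∧ Sum.inl b ∉ F ∧
      ((E a b ∧ Sum.inr (a, b) ∉ F ∧ wH a b = ENNReal.ofReal (w a b)) ∨
        (b = t ∧ wH a b = DSO.fdistL E w F L a t ∧ DSO.fdistL E w F L a t ≠ ⊤)))
    (ht : Sum.inl t ∉ F) :
    ∀ (p : List V) (u : V), IsWalk EH p u t → fdist E w F u t ≤ ewt wH p := by
  intro p
  induction p with
  | nil => intro u h; exact absurd rfl h.1
  | cons a tl ih =>
    intro u h
    have hau : a = u := isWalk_head' h
    subst hau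
    cases tl with
    | nil =>
      have hat : a = t := by have := h.2.2.1; simpa using this
      subst hat
      have hmem : IsFWalk E F [a] a a :=
        ⟨⟨List.cons_ne_nil _ _, rfl, rfl, List.isChain_singleton a⟩, by
          intro x hx; simp at hx; subst hx; exact ht⟩
      calc fdist E w F a a ≤ ENNReal.ofReal (DSO.wt w [a]) := sInf_le ⟨_, hmem, rfl⟩
        _ ≤ ewt wH [a] := by
            rw [show DSO.wt w [a] = 0 from rfl]; simp [DSO.ewt]
    | cons b rest =>
      have hE : EH a b := (List.isChain_cons_cons.1 h.2.2.2).1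
      have htail : IsWalk EH (b :: rest) b t := isWalk_tail' h
      have hrec := ih b htail
      obtain ⟨ha, hb, hcase⟩ := hH a b hE
      rw [show ewt wH (a :: b :: rest) = wH a b + ewt wH (b :: rest) from rfl]
      rcases hcase with ⟨hEab, hnab, hwab⟩ | ⟨hbt, hwab, -⟩
      · calc fdist E w F a t ≤ ENNReal.ofReal (w a b) + fdist E w F b t :=
              fdist_triangle' hw hEab hnab ha
          _ ≤ wH a b + ewt wH (b :: rest) := by rw [hwab]; exact add_le_add_right hrec _
      · calc fdist E w F a t ≤ fdistL E w F L a t := fdist_le_fdistL' E w F L a t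
          _ = wH a b := hwab.symm
          _ ≤ wH a b + ewt wH (b :: rest) := le_self_add

lemma ewdist_le_wt' (E : V → V → Prop) (w : V → V → ℝ) (hw : ∀ a b, 0 ≤ w a b)
    (F : Set (V ⊕ V × V)) (t : V) (L : ℕ)
    (EH : V → V → Prop) (wH : V → V → ℝ≥0∞) :
    ∀ (q : List V) (u : V), IsFWalk E F q u t → pathLen q ≤ L →
      (∀ i, i + 1 < q.length → ∃ a b, q[i]? = some a ∧ q[i + 1]? = some b ∧
        ((EH a b ∧ E a b ∧ Sum.inr (a, b) ∉ F ∧ wH a b = ENNReal.ofReal (w a b)) ∨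
          (EH a t ∧ wH a t = DSO.fdistL E w F L a t ∧ DSO.fdistL E w F L a t ≠ ⊤))) →
      ewdist EH wH u t ≤ ENNReal.ofReal (DSO.wt w q) := by
  intro q
  induction q with
  | nil => intro u h; exact absurd rfl h.1.1
  | cons a tl ih =>
    intro u h hlen hseq
    have hau : a = u := isWalk_head' h.1
    subst hau
    cases tl with
    | nil =>
      have hat : a = t := by have := h.1.2.2.1; simpa using this
      subst hat
      have hmem : IsWalk EH [a] a a := ⟨List.cons_ne_nil _ _, rfl, rfl, List.isChain_singleton a⟩
      calc ewdist EH wH a a ≤ ewt wH [a] := sInf_le ⟨_, hmem, rfl⟩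
        _ ≤ ENNReal.ofReal (DSO.wt w [a]) := by rw [show ewt wH [a] = 0 from rfl]; exact zero_le
    | cons b rest =>
      obtain ⟨a', b', ha', hb', hcase⟩ := hseq 0 (by simp)
      have ha'' : a = a' := by simpa using ha'
      have hb'' : b = b' := by simpa using hb'
      subst ha''; subst hb''
      rcases hcase with ⟨hEab, hGab, hnab, hwab⟩ | ⟨hEat, hwat, -⟩
      · have htail : IsFWalk E F (b :: rest) b t :=
          ⟨isWalk_tail' h.1, fun x hx => h.2 x (List.mem_cons_of_mem _ hx)⟩
        have hlen' : pathLen (b :: rest) ≤ L := by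
          have : pathLen (b :: rest) ≤ pathLen (a :: b :: rest) := by
            simp [pathLen]
          exact this.trans hlen
        have hseq' : ∀ i, i + 1 < (b :: rest).length → ∃ a' b', (b :: rest)[i]? = some a' ∧
            (b :: rest)[i + 1]? = some b' ∧
            ((EH a' b' ∧ E a' b' ∧ Sum.inr (a', b') ∉ F ∧ wH a' b' = ENNReal.ofReal (w a' b')) ∨
              (EH a' t ∧ wH a' t = DSO.fdistL E w F L a' t ∧ DSO.fdistL E w F L a' t ≠ ⊤)) := by
          intro i hi
          have := hseq (i + 1) (by simpa using Nat.succ_lt_succ hi)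
          simpa using this
        calc ewdist EH wH a t ≤ wH a b + ewdist EH wH b t := ewdist_triangle' hEab
          _ ≤ ENNReal.ofReal (w a b) + ENNReal.ofReal (DSO.wt w (b :: rest)) := by
              rw [hwab]; exact add_le_add_right (ih b htail hlen' hseq') _
          _ = ENNReal.ofReal (DSO.wt w (a :: b :: rest)) := (ofReal_wt_cons' w hw a b rest).symm
      · have hmem : IsWalk EH [a, t] a t := by
          refine ⟨List.cons_ne_nil _ _, rfl, rfl, ?_⟩
          exact List.isChain_cons_cons.2 ⟨hEat, List.isChain_singleton t⟩
        calc ewdist EH wH a t ≤ ewt wH [a, t] := sInf_le ⟨_, hmem, rfl⟩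
          _ = fdistL E w F L a t := by
              rw [show ewt wH [a, t] = wH a t + ewt wH [t] from rfl,
                show ewt wH [t] = 0 from rfl, add_zero, hwat]
          _ ≤ ENNReal.ofReal (DSO.wt w (a :: b :: rest)) := sInf_le ⟨_, ⟨h, hlen⟩, rfl⟩

end Aux

/-- Let `H` be a weighted digraph whose vertices avoid `F` and whose edges
are either (i) surviving edges of `G` with their original weights, or (ii) shortcut edges
`(u,t)` of (finite) weight `d^L_G(u,t,F)`. If `⟨v_0,…,v_m⟩ = Q` is a minimum-weight `s`-to-`t`
path among paths in `G∖F` with at most `L` edges, and for every `0 ≤ i < m` either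
`(v_i, v_{i+1})` is an edge of `H` of type (i) or `(v_i, t)` is an edge of `H` of type (ii),
then `d_G(s,t,F) ≤ d_H(s,t) ≤ d^L_G(s,t,F)`. -/
theorem stmt15 {V : Type*} [Fintype V]
    (E : V → V → Prop) (w : V → V → ℝ) (hw : ∀ a b, 0 ≤ w a b)
    (F : Set (V ⊕ V × V)) (t : V) (L : ℕ) (hL : 1 ≤ L)
    (EH : V → V → Prop) (wH : V → V → ℝ≥0∞)
    (hH : ∀ a b, EH a b → Sum.inl a ∉ F ∧ Sum.inl b ∉ F ∧
      ((E a b ∧ Sum.inr (a, b) ∉ F ∧ wH a b = ENNReal.ofReal (w a b)) ∨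
        (b = t ∧ wH a b = DSO.fdistL E w F L a t ∧ DSO.fdistL E w F L a t ≠ ⊤)))
    (s : V) (Q : List V)
    (hQ : DSO.IsFWalk E F Q s t) (hQL : DSO.pathLen Q ≤ L)
    (hQmin : ENNReal.ofReal (DSO.wt w Q) = DSO.fdistL E w F L s t)
    (hseq : ∀ i, i + 1 < Q.length → ∃ a b, Q[i]? = some a ∧ Q[i + 1]? = some b ∧
      ((EH a b ∧ E a b ∧ Sum.inr (a, b) ∉ F ∧ wH a b = ENNReal.ofReal (w a b)) ∨
        (EH a t ∧ wH a t = DSO.fdistL E w F L a t ∧ DSO.fdistL E w F L a t ≠ ⊤))) :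
    DSO.fdist E w F s t ≤ DSO.ewdist EH wH s t ∧
    DSO.ewdist EH wH s t ≤ DSO.fdistL E w F L s t := by
  have ht : Sum.inl t ∉ F := hQ.2 t (mem_of_getLast?' hQ.1.2.2.1)
  constructor
  · refine le_sInf ?_
    rintro x ⟨p, hp, rfl⟩
    exact fdist_le_ewt' E w hw F t L EH wH hH ht p s hp
  · rw [← hQmin]
    exact ewdist_le_wt' E w hw F t L EH wH Q s hQ hQL hseq
end
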